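/- Let M be a matroid on ground set E with connected components F_1, ..., F_l, and let M' be a matroid of the same rank on E all of whose bases are bases of M (M' ≤ M in the weak order). Then each F_j is a union of connected components of M', and the restriction M'|_{F_j} satisfies M'|_{F_j} ≤ M|_{F_j}. -/

import Mathlib

/-- `i` and `j` are joined by a single basis exchange in the matroid `N`:
there are bases `B, B'` of `N` with `B' = (B \ {i}) ∪ {j}`. -/
def MatroidStep {α : Type*} (N : Matroid α) (i j : α) : Prop :=
  ∃ B B' : Set α, N.IsBase B ∧ N.IsBase B' ∧ i ∈ B ∧ j ∈ B' ∧ B' = insert j (B \ {i})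

/-- `i` and `j` lie in the same connected component of `N`. -/
def SameComp {α : Type*} (N : Matroid α) (i j : α) : Prop :=
  Relation.EqvGen (MatroidStep N) i j

/-- `F` is a connected component of the matroid `N`. -/
def IsComponent {α : Type*} (N : Matroid α) (F : Set α) : Prop :=
  ∃ i ∈ N.E, F = {j | j ∈ N.E ∧ SameComp N i j}

/-- If `F` is a component of `M` and `B` is a base of `M`, then `B ∩ F` is a basis of `F`. -/
lemma inter_basis'_of_component {α : Type*} {M : Matroid α} {F : Set α}
    (hF : IsComponent M F) {B : Set α} (hB : M.IsBase B) : M.IsBasis' (B ∩ F) F := by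
  obtain ⟨i, hiE, hFeq⟩ := hF
  have hind : M.Indep (B ∩ F) := hB.indep.subset Set.inter_subset_left
  refine ⟨⟨hind, Set.inter_subset_right⟩, ?_⟩
  rintro J ⟨hJi, hJF⟩ hBFJ x hxJ
  by_contra hxBF
  have hxF : x ∈ {j | j ∈ M.E ∧ SameComp M i j} := hFeq ▸ hJF hxJ
  have hxB : x ∉ B := fun h => hxBF ⟨h, hFeq ▸ hxF⟩
  have hJx : M.Indep (insert x (B ∩ F)) :=
    hJi.subset (Set.insert_subset hxJ hBFJ)
  obtain ⟨B₂, hB₂, hsub, hsub'⟩ := hJx.exists_isBase_subset_union_isBase hB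
  have hxB₂ : x ∈ B₂ := hsub (Set.mem_insert _ _)
  have hBB₂ : ¬ (B ⊆ B₂) := by
    intro h
    exact hxB ((hB.eq_of_subset_indep hB₂.indep h) ▸ hxB₂)
  obtain ⟨y, hyB, hyB₂⟩ := Set.not_subset.1 hBB₂
  obtain ⟨z, hz, hz'⟩ := hB.exchange hB₂ ⟨hyB, hyB₂⟩
  have hzx : z = x := by
    have := hsub' hz.1
    rcases this with h | h
    · rcases h with h | h
      · exact h
      · exact absurd h.1 hz.2
    · exact absurd h hz.2
  rw [hzx] at hz'
  have hstep : MatroidStep M y x :=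
    ⟨B, insert x (B \ {y}), hB, hz', hyB, Set.mem_insert _ _, rfl⟩
  have hyF : y ∈ F := by
    rw [hFeq]
    refine ⟨hB.subset_ground hyB, ?_⟩
    exact Relation.EqvGen.trans _ _ _ hxF.2 (Relation.EqvGen.symm _ _ (Relation.EqvGen.rel _ _ hstep))
  exact hyB₂ (hsub (Set.mem_insert_of_mem _ ⟨hyB, hyF⟩))

theorem stmt17 {α : Type*} (M M' : Matroid α) (hE : M'.E = M.E)
    (hle : ∀ B, M'.IsBase B → M.IsBase B)
    (F : Set α) (hF : IsComponent M F) :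
    (∀ F', IsComponent M' F' → (F' ∩ F).Nonempty → F' ⊆ F) ∧
    (∀ B, (M'.restrict F).IsBase B → (M.restrict F).IsBase B) := by
  have hmono : ∀ a b, SameComp M' a b → SameComp M a b := by
    intro a b h
    refine Relation.EqvGen.mono ?_ _ _ h
    rintro u v ⟨B, B', hB, hB', hu, hv, heq⟩
    exact ⟨B, B', hle _ hB, hle _ hB', hu, hv, heq⟩
  constructor
  · rintro F' ⟨i', hi'E, rfl⟩ ⟨k, hkF', hkF⟩ x hxF'
    obtain ⟨i, hiE, hFeq⟩ := hF
    rw [hFeq] at hkF ⊢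
    refine ⟨hE ▸ hxF'.1, ?_⟩
    have h1 : SameComp M' k x :=
      Relation.EqvGen.trans _ _ _ (Relation.EqvGen.symm _ _ hkF'.2) hxF'.2
    exact Relation.EqvGen.trans _ _ _ hkF.2 (hmono _ _ h1)
  · intro B hB
    rw [Matroid.isBase_restrict_iff'] at hB ⊢
    obtain ⟨B₀, hB₀, hBB₀⟩ := hB.indep.exists_isBase_superset
    have hBeq : B = B₀ ∩ F :=
      hB.eq_of_subset_indep (hB₀.indep.subset Set.inter_subset_left)
        (Set.subset_inter hBB₀ hB.subset) Set.inter_subset_right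
    rw [hBeq]
    exact inter_basis'_of_component hF (hle _ hB₀)
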